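/- Let 0 < ε ≤ 1/2. If there exists a collection P of pairwise vertex-disjoint directed paths in D_vertex such that for at least (1/2 + ε)·2k of the 2k terminal pairs (s,t) ∈ T the collection P contains a shortest s⇝t path, then G contains a clique of size at least 2εk. -/

import Mathlib

/-- A directed path (self-avoiding walk) from `s` to `t` in the digraph with
edge relation `E`, given as the list of its vertices in order. -/
structure IsPathList {V : Type*} (E : V → V → Prop) (s t : V) (p : List V) : Prop where
  chain : p.Chain' E
  nodup : p.Nodup
  head : p.head? = some s
  last : p.getLast? = some t

/-- A shortest directed `s⇝t` path, where the length of a path is its number of vertices. -/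
def IsShortestDirPath {V : Type*} (E : V → V → Prop) (s t : V) (p : List V) : Prop :=
  IsPathList E s t p ∧ ∀ q : List V, IsPathList E s t q → p.length ≤ q.length

/-- Symmetrization of a relation: the adjacency of the undirected graph obtained by
forgetting the orientation of the edges. -/
def UAdj {V : Type*} (E : V → V → Prop) (x y : V) : Prop := E x y ∨ E y x

/-- The cost of a path: the sum of the costs of its vertices. -/
def pathCost {V : Type*} (cost : V → ℕ) (p : List V) : ℕ := (p.map cost).sum

/-- A shortest (minimum-cost) `s`–`t` path in the undirected graph obtained from `E`. -/
def IsShortestCostPath {V : Type*} (E : V → V → Prop) (cost : V → ℕ) (s t : V)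
    (p : List V) : Prop :=
  IsPathList (UAdj E) s t p ∧
    ∀ q : List V, IsPathList (UAdj E) s t q → pathCost cost p ≤ pathCost cost q

/-- The (directed) edges traversed by a path, as ordered pairs of consecutive vertices. -/
def dirEdges {V : Type*} (p : List V) : List (V × V) := p.zip p.tail

/-- Two directed paths are edge-disjoint. -/
def EdgeDisj {V : Type*} (p q : List V) : Prop := ∀ e ∈ dirEdges p, e ∉ dirEdges q

/-- The (undirected) edges traversed by a path, as unordered pairs. -/
def uEdges {V : Type*} (p : List V) : List (Sym2 V) := (dirEdges p).map fun e => s(e.1, e.2)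

/-- Two undirected paths are edge-disjoint. -/
def UEdgeDisj {V : Type*} (p q : List V) : Prop := ∀ e ∈ uEdges p, e ∉ uEdges q

/-- Two paths are vertex-disjoint. -/
def VertDisj {V : Type*} (p q : List V) : Prop := ∀ v ∈ p, v ∉ q

/-- `(q,ℓ) ∈ S_{i,j}`: for `i = j` this means `q = ℓ` and for `i ≠ j` it means that
`v_q v_ℓ` is an edge of `G`. -/
def Split {k N : ℕ} (G : SimpleGraph (Fin N)) (i j : Fin k) (q ℓ : Fin N) : Prop :=
  (i = j ∧ q = ℓ) ∨ (i ≠ j ∧ G.Adj q ℓ)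

instance {k N : ℕ} (G : SimpleGraph (Fin N)) [DecidableRel G.Adj]
    (i j : Fin k) (q ℓ : Fin N) : Decidable (Split G i j q ℓ) := by
  unfold Split; infer_instance

/-- The vertices of the graph `D_vertex` (also the vertex set of `U_vertex`): each grid
vertex `w_{i,j}^{q,ℓ}` of `D_int` gives rise to `gridH i j q ℓ` (the vertex `w_Hor`) and
`gridV i j q ℓ` (the vertex `w_Ver`, which carries edges only when `w` is vertex-split;
when `w` is not split the single vertex `w_Hor = w_Ver` is represented by `gridH` and
`gridV` is isolated), plus the terminal vertices. -/
inductive DVertV (k N : ℕ) where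
  | gridH (i j : Fin k) (q ℓ : Fin N)
  | gridV (i j : Fin k) (q ℓ : Fin N)
  | a (i : Fin k)
  | b (i : Fin k)
  | c (j : Fin k)
  | d (j : Fin k)
  deriving DecidableEq

/-- The vertex of `D_vertex` carrying the vertical (south/north) edges at the former
grid vertex `w_{i,j}^{q,ℓ}`: `w_Ver` if it is vertex-split, and `w_Hor = w_Ver`
otherwise. -/
def vNode {k N : ℕ} (G : SimpleGraph (Fin N)) [DecidableRel G.Adj]
    (i j : Fin k) (q ℓ : Fin N) : DVertV k N :=
  if Split G i j q ℓ then DVertV.gridV i j q ℓ else DVertV.gridH i j q ℓ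

/-- The directed edges of `D_vertex`: horizontal (west/east) edges attach to `w_Hor`
and vertical (south/north) edges attach to `w_Ver` (with `w_Hor = w_Ver` at non-split
vertices); terminal edges play the role of the corresponding boundary edges. -/
inductive DVertE (k N : ℕ) (G : SimpleGraph (Fin N)) [DecidableRel G.Adj] :
    DVertV k N → DVertV k N → Prop where
  /-- former edge `w_{i,j}^{q,ℓ} → w_{i,j}^{q,ℓ+1}` (vertical) -/
  | up (i j : Fin k) (q ℓ ℓ' : Fin N) (h : (ℓ' : ℕ) = (ℓ : ℕ) + 1) :
      DVertE k N G (vNode G i j q ℓ) (vNode G i j q ℓ')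
  /-- former edge `w_{i,j}^{q,ℓ} → w_{i,j}^{q+1,ℓ}` (horizontal) -/
  | right (i j : Fin k) (q q' ℓ : Fin N) (h : (q' : ℕ) = (q : ℕ) + 1) :
      DVertE k N G (.gridH i j q ℓ) (.gridH i j q' ℓ)
  /-- former edge `w_{i,j}^{N,ℓ} → w_{i+1,j}^{1,ℓ}` (horizontal) -/
  | hmatch (i i' j : Fin k) (q q' ℓ : Fin N)
      (hi : (i' : ℕ) = (i : ℕ) + 1) (hq : (q : ℕ) + 1 = N) (hq' : (q' : ℕ) = 0) :
      DVertE k N G (.gridH i j q ℓ) (.gridH i' j q' ℓ)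
  /-- former edge `w_{i,j}^{ℓ,N} → w_{i,j+1}^{ℓ,1}` (vertical) -/
  | vmatch (i j j' : Fin k) (q ℓ ℓ' : Fin N)
      (hj : (j' : ℕ) = (j : ℕ) + 1) (hl : (ℓ : ℕ) + 1 = N) (hl' : (ℓ' : ℕ) = 0) :
      DVertE k N G (vNode G i j q ℓ) (vNode G i j' q ℓ')
  /-- former edge `a_i → w_{i,1}^{q,1}` (vertical: `a_i` plays the south neighbour) -/
  | srcA (i j : Fin k) (q ℓ : Fin N) (hj : (j : ℕ) = 0) (hl : (ℓ : ℕ) = 0) :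
      DVertE k N G (.a i) (vNode G i j q ℓ)
  /-- former edge `w_{i,k}^{q,N} → b_i` (vertical) -/
  | snkB (i j : Fin k) (q ℓ : Fin N) (hj : (j : ℕ) + 1 = k) (hl : (ℓ : ℕ) + 1 = N) :
      DVertE k N G (vNode G i j q ℓ) (.b i)
  /-- former edge `c_j → w_{1,j}^{1,ℓ}` (horizontal: `c_j` plays the west neighbour) -/
  | srcC (i j : Fin k) (q ℓ : Fin N) (hi : (i : ℕ) = 0) (hq : (q : ℕ) = 0) :
      DVertE k N G (.c j) (.gridH i j q ℓ)
  /-- former edge `w_{k,j}^{N,ℓ} → d_j` (horizontal) -/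
  | snkD (i j : Fin k) (q ℓ : Fin N) (hi : (i : ℕ) + 1 = k) (hq : (q : ℕ) + 1 = N) :
      DVertE k N G (.gridH i j q ℓ) (.d j)

/-- `Canonical_vertex(r; c_j⇝d_j)`: obtained from `Canonical(r; c_j⇝d_j)` by routing
through `w_Hor` at every vertex-split grid vertex (and through `w_Hor = w_Ver` at
not-split vertices). -/
def canonVertH (k N : ℕ) (j : Fin k) (r : Fin N) : List (DVertV k N) :=
  DVertV.c j ::
    (((List.finRange k).flatMap fun i =>
        (List.finRange N).map fun q => DVertV.gridH i j q r) ++ [DVertV.d j])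

/-- `Canonical_vertex(r; a_i⇝b_i)`: obtained from `Canonical(r; a_i⇝b_i)` by routing
through `w_Ver` at every vertex-split grid vertex (and through `w_Hor = w_Ver` at
not-split vertices). -/
def canonVertV {k N : ℕ} (G : SimpleGraph (Fin N)) [DecidableRel G.Adj]
    (i : Fin k) (r : Fin N) : List (DVertV k N) :=
  DVertV.a i ::
    (((List.finRange k).flatMap fun j =>
        (List.finRange N).map fun ℓ => vNode G i j r ℓ) ++ [DVertV.b i])
/-- The source of the `x`-th terminal pair of `T`: `a_i` for `x = inl i`
(pair `(a_i, b_i)`), and `c_j` for `x = inr j` (pair `(c_j, d_j)`). -/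
def vSrc {k N : ℕ} (x : Fin k ⊕ Fin k) : DVertV k N :=
  match x with
  | .inl i => DVertV.a i
  | .inr j => DVertV.c j

/-- The sink of the `x`-th terminal pair of `T`. -/
def vDst {k N : ℕ} (x : Fin k ⊕ Fin k) : DVertV k N :=
  match x with
  | .inl i => DVertV.b i
  | .inr j => DVertV.d j

section Aux
variable {k N : ℕ} (G : SimpleGraph (Fin N)) [DecidableRel G.Adj]

lemma vNode_eq_iff {i i' j j' : Fin k} {q q' ℓ ℓ' : Fin N} :
    vNode G i j q ℓ = vNode G i' j' q' ℓ' ↔ i = i' ∧ j = j' ∧ q = q' ∧ ℓ = ℓ' := by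
  constructor
  · intro h
    unfold vNode at h
    split at h <;> split at h <;> simp_all
  · rintro ⟨rfl, rfl, rfl, rfl⟩; rfl

lemma vNode_ne_a {i' : Fin k} {i j : Fin k} {q ℓ : Fin N} :
    vNode G i j q ℓ ≠ DVertV.a i' := by unfold vNode; split <;> simp

lemma vNode_ne_b {i' : Fin k} {i j : Fin k} {q ℓ : Fin N} :
    vNode G i j q ℓ ≠ DVertV.b i' := by unfold vNode; split <;> simp

lemma vNode_ne_c {i' : Fin k} {i j : Fin k} {q ℓ : Fin N} :
    vNode G i j q ℓ ≠ DVertV.c i' := by unfold vNode; split <;> simp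

lemma vNode_of_not_split {i j : Fin k} {q ℓ : Fin N} (h : ¬ Split G i j q ℓ) :
    vNode G i j q ℓ = DVertV.gridH i j q ℓ := by unfold vNode; rw [if_neg h]

lemma split_symm {i j : Fin k} {q ℓ : Fin N} : Split G i j q ℓ ↔ Split G j i ℓ q := by
  unfold Split
  constructor <;> rintro (⟨rfl, rfl⟩ | ⟨hne, h⟩)
  · exact Or.inl ⟨rfl, rfl⟩
  · exact Or.inr ⟨Ne.symm hne, h.symm⟩
  · exact Or.inl ⟨rfl, rfl⟩
  · exact Or.inr ⟨Ne.symm hne, h.symm⟩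

/-- The transposition symmetry of `D_vertex`. -/
def sigmaV : DVertV k N → DVertV k N
  | .gridH i j q ℓ => vNode G j i ℓ q
  | .gridV i j q ℓ => if Split G j i ℓ q then .gridH j i ℓ q else .gridV j i ℓ q
  | .a i => .c i
  | .b i => .d i
  | .c j => .a j
  | .d j => .b j

lemma sigmaV_vNode {i j : Fin k} {q ℓ : Fin N} :
    sigmaV G (vNode G i j q ℓ) = DVertV.gridH j i ℓ q := by
  unfold vNode
  split
  · next h => simp only [sigmaV, if_pos ((split_symm G).mp h)]
  · next h =>
    simp only [sigmaV]
    unfold vNode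
    rw [if_neg (fun hh => h ((split_symm G).mp hh))]

lemma sigmaV_invol (v : DVertV k N) : sigmaV G (sigmaV G v) = v := by
  cases v with
  | gridH i j q ℓ => rw [show sigmaV G (.gridH i j q ℓ) = vNode G j i ℓ q from rfl, sigmaV_vNode]
  | gridV i j q ℓ =>
    show sigmaV G (if Split G j i ℓ q then DVertV.gridH j i ℓ q else DVertV.gridV j i ℓ q) = _
    by_cases h : Split G j i ℓ q
    · rw [if_pos h]
      show vNode G i j q ℓ = _
      unfold vNode
      rw [if_pos ((split_symm G).mp h)]
    · rw [if_neg h]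
      show (if Split G i j q ℓ then DVertV.gridH i j q ℓ else DVertV.gridV i j q ℓ) = _
      rw [if_neg (fun hh => h ((split_symm G).mp hh))]
  | a i => rfl
  | b i => rfl
  | c j => rfl
  | d j => rfl

lemma sigmaV_inj : Function.Injective (sigmaV (k := k) G) := by
  intro x y h
  have := congrArg (sigmaV G) h
  rwa [sigmaV_invol, sigmaV_invol] at this

lemma sigmaV_edge {v w : DVertV k N} (h : DVertE k N G v w) :
    DVertE k N G (sigmaV G v) (sigmaV G w) := by
  cases h with
  | up i j q ℓ ℓ' h => rw [sigmaV_vNode, sigmaV_vNode]; exact .right j i ℓ ℓ' q h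
  | right i j q q' ℓ h =>
    show DVertE k N G (vNode G j i ℓ q) (vNode G j i ℓ q')
    exact .up j i ℓ q q' h
  | hmatch i i' j q q' ℓ hi hq hq' =>
    show DVertE k N G (vNode G j i ℓ q) (vNode G j i' ℓ q')
    exact .vmatch j i i' ℓ q q' hi hq hq'
  | vmatch i j j' q ℓ ℓ' hj hl hl' =>
    rw [sigmaV_vNode, sigmaV_vNode]; exact .hmatch j j' i ℓ ℓ' q hj hl hl'
  | srcA i j q ℓ hj hl =>
    rw [sigmaV_vNode]
    exact .srcC j i ℓ q hj hl
  | snkB i j q ℓ hj hl =>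
    rw [show sigmaV G (vNode G i j q ℓ) = _ from sigmaV_vNode G]
    exact .snkD j i ℓ q hj hl
  | srcC i j q ℓ hi hq =>
    show DVertE k N G (.a j) (vNode G j i ℓ q)
    exact .srcA j i ℓ q hi hq
  | snkD i j q ℓ hi hq =>
    show DVertE k N G (vNode G j i ℓ q) (.b j)
    exact .snkB j i ℓ q hi hq

end Aux
section Aux2
set_option linter.unusedSectionVars false
variable {k N : ℕ} (G : SimpleGraph (Fin N)) [DecidableRel G.Adj]

/-- The potential counting vertical progress. -/
def phiV (k N : ℕ) : DVertV k N → ℕ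
  | .gridH _ j _ ℓ => (j : ℕ) * N + (ℓ : ℕ) + 1
  | .gridV _ j _ ℓ => (j : ℕ) * N + (ℓ : ℕ) + 1
  | .a _ => 0
  | .b _ => k * N + 1
  | .c _ => k * N + 2
  | .d _ => 0

lemma phiV_vNode {i j : Fin k} {q ℓ : Fin N} :
    phiV k N (vNode G i j q ℓ) = (j : ℕ) * N + (ℓ : ℕ) + 1 := by
  unfold vNode; split <;> rfl

lemma pos_add_one_le (j : Fin k) (ℓ : Fin N) : (j : ℕ) * N + (ℓ : ℕ) + 1 ≤ k * N := by
  have h1 : (j : ℕ) + 1 ≤ k := j.isLt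
  have h2 : ((j : ℕ) + 1) * N ≤ k * N := Nat.mul_le_mul_right _ h1
  have h3 : (ℓ : ℕ) < N := ℓ.isLt
  rw [Nat.add_mul, Nat.one_mul] at h2
  omega

lemma pos_inj {j j' : Fin k} {ℓ ℓ' : Fin N}
    (h : (j : ℕ) * N + (ℓ : ℕ) = (j' : ℕ) * N + (ℓ' : ℕ)) : j = j' ∧ ℓ = ℓ' := by
  have hl : (ℓ : ℕ) < N := ℓ.isLt
  have hl' : (ℓ' : ℕ) < N := ℓ'.isLt
  have hj : (j : ℕ) = (j' : ℕ) := by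
    rcases Nat.lt_trichotomy (j : ℕ) (j' : ℕ) with h1 | h1 | h1
    · have h2 : ((j : ℕ) + 1) * N ≤ (j' : ℕ) * N := Nat.mul_le_mul_right _ h1
      rw [Nat.add_mul, Nat.one_mul] at h2; omega
    · exact h1
    · have h2 : ((j' : ℕ) + 1) * N ≤ (j : ℕ) * N := Nat.mul_le_mul_right _ h1
      rw [Nat.add_mul, Nat.one_mul] at h2; omega
  rw [hj] at h
  refine ⟨Fin.ext hj, Fin.ext ?_⟩
  omega

lemma phiV_step {v w : DVertV k N} (h : DVertE k N G v w) : phiV k N w ≤ phiV k N v + 1 := by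
  cases h with
  | up i j q ℓ ℓ' h => rw [phiV_vNode, phiV_vNode]; omega
  | right i j q q' ℓ h => exact Nat.le_succ _
  | hmatch i i' j q q' ℓ hi hq hq' => exact Nat.le_succ _
  | vmatch i j j' q ℓ ℓ' hj hl hl' =>
    rw [phiV_vNode, phiV_vNode, hj, hl', Nat.add_mul, Nat.one_mul]; omega
  | srcA i j q ℓ hj hl => rw [phiV_vNode, hj, hl]; simp [phiV]
  | snkB i j q ℓ hj hl =>
    rw [phiV_vNode]
    show k * N + 1 ≤ _
    have : ((j : ℕ) + 1) * N = k * N := by rw [hj]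
    rw [Nat.add_mul, Nat.one_mul] at this
    omega
  | srcC i j q ℓ hi hq =>
    show (j : ℕ) * N + (ℓ : ℕ) + 1 ≤ k * N + 2 + 1
    have := pos_add_one_le j ℓ
    omega
  | snkD i j q ℓ hi hq => exact Nat.zero_le _

lemma getLast?_cons_ne_nil {V : Type*} {x : V} {l : List V} (h : l ≠ []) :
    (x :: l).getLast? = l.getLast? := by
  cases l with
  | nil => exact absurd rfl h
  | cons y l' => exact List.getLast?_cons_cons ..

/-- Potential along a chain. -/
lemma chain_pot {V : Type*} {E : V → V → Prop} {phi : V → ℕ}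
    (hE : ∀ v w, E v w → phi w ≤ phi v + 1) :
    ∀ (p : List V) (s t : V), p.Chain' E → p.head? = some s → p.getLast? = some t →
      phi t + 1 ≤ phi s + p.length := by
  intro p
  induction p with
  | nil => intro s t _ hh _; simp at hh
  | cons v rest IH =>
    intro s t hch hh hl
    have hv : v = s := by simpa using hh
    subst hv
    cases rest with
    | nil =>
      have : v = t := by simpa using hl
      subst this; simp
    | cons w rest' =>
      rw [List.Chain', List.isChain_cons_cons] at hch
      have h1 := hE _ _ hch.1
      have h2 := IH w t hch.2 rfl (by rw [← hl]; exact (List.getLast?_cons_cons ..).symm)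
      simp only [List.length_cons] at *
      omega

end Aux2
section Aux3
set_option linter.unusedSectionVars false
variable {k N : ℕ} (G : SimpleGraph (Fin N)) [DecidableRel G.Adj]

/-- The canonical vertical path from position `t` on, row `r`, ending at `b i`. -/
def canonAux (hN : 0 < N) (i : Fin k) (r : Fin N) (t : ℕ) : List (DVertV k N) :=
  if h : t < k * N then
    vNode G i ⟨t / N, Nat.div_lt_of_lt_mul (by rw [Nat.mul_comm]; exact h)⟩ r
        ⟨t % N, Nat.mod_lt _ hN⟩ :: canonAux hN i r (t + 1)
  else [DVertV.b i]
termination_by k * N - t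
decreasing_by omega

lemma div_mod_succ_lt {t : ℕ} (hN : 0 < N) (h : t % N + 1 < N) :
    (t + 1) / N = t / N ∧ (t + 1) % N = t % N + 1 := by
  have h0 := Nat.div_add_mod t N
  have := (Nat.div_mod_unique hN (a := t + 1) (b := N) (c := t % N + 1) (d := t / N)).mpr
    ⟨by omega, by omega⟩
  exact ⟨this.1, this.2⟩

lemma div_mod_succ_eq {t : ℕ} (hN : 0 < N) (h : t % N + 1 = N) :
    (t + 1) / N = t / N + 1 ∧ (t + 1) % N = 0 := by
  have h0 := Nat.div_add_mod t N
  have := (Nat.div_mod_unique hN (a := t + 1) (b := N) (c := 0) (d := t / N + 1)).mpr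
    ⟨by rw [Nat.mul_add, Nat.mul_one]; omega, hN⟩
  exact ⟨this.1, this.2⟩

lemma step_edge (i : Fin k) (r : Fin N) (j j' : Fin k) (ℓ ℓ' : Fin N)
    (h : (j' : ℕ) * N + (ℓ' : ℕ) = (j : ℕ) * N + (ℓ : ℕ) + 1) :
    DVertE k N G (vNode G i j r ℓ) (vNode G i j' r ℓ') := by
  by_cases hm : (ℓ : ℕ) + 1 < N
  · obtain ⟨hj, hl⟩ := pos_inj (j := j') (ℓ := ℓ') (j' := j) (ℓ' := (⟨(ℓ : ℕ) + 1, hm⟩ : Fin N)) h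
    rw [hj]
    exact DVertE.up i j r ℓ ℓ' (by rw [hl])
  · have hm' : (ℓ : ℕ) + 1 = N := by have := ℓ.isLt; omega
    refine DVertE.vmatch i j j' r ℓ ℓ' ?_ hm' ?_
    · -- (j' : ℕ) = j + 1
      have hb : (ℓ' : ℕ) < N := ℓ'.isLt
      rcases Nat.lt_trichotomy (j' : ℕ) ((j : ℕ) + 1) with h1 | h1 | h1
      · have h2 : ((j' : ℕ) + 1) * N ≤ ((j : ℕ) + 1) * N := Nat.mul_le_mul_right _ h1
        rw [Nat.add_mul, Nat.one_mul] at h2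
        rw [Nat.add_mul, Nat.one_mul] at h2
        omega
      · exact h1
      · have h2 : ((j : ℕ) + 2) * N ≤ (j' : ℕ) * N := Nat.mul_le_mul_right _ h1
        rw [Nat.add_mul] at h2
        omega
    · -- (ℓ' : ℕ) = 0
      have h1 : (j' : ℕ) * N = ((j : ℕ) + 1) * N := by
        have hb : (ℓ' : ℕ) < N := ℓ'.isLt
        rcases Nat.lt_trichotomy (j' : ℕ) ((j : ℕ) + 1) with h1 | h1 | h1
        · exfalso
          have h2 : ((j' : ℕ) + 1) * N ≤ ((j : ℕ) + 1) * N := Nat.mul_le_mul_right _ h1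
          rw [Nat.add_mul, Nat.one_mul, Nat.add_mul, Nat.one_mul] at h2
          omega
        · rw [h1]
        · exfalso
          have h2 : ((j : ℕ) + 2) * N ≤ (j' : ℕ) * N := Nat.mul_le_mul_right _ h1
          rw [Nat.add_mul] at h2
          omega
      rw [h1, Nat.add_mul, Nat.one_mul] at h
      omega

lemma canonAux_props (hN : 0 < N) (i : Fin k) (r : Fin N) :
    ∀ (m t : ℕ), k * N ≤ t + m → t ≤ k * N →
      (canonAux G hN i r t).length + t = k * N + 1 ∧
      (canonAux G hN i r t).getLast? = some (DVertV.b i) ∧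
      (canonAux G hN i r t).Chain' (DVertE k N G) ∧
      (∀ v ∈ canonAux G hN i r t, v = DVertV.b i ∨
        ∃ (j : Fin k) (ℓ : Fin N), v = vNode G i j r ℓ ∧ t ≤ (j : ℕ) * N + ℓ) ∧
      (canonAux G hN i r t).Nodup := by
  intro m
  induction m with
  | zero =>
    intro t ht ht2
    rw [canonAux, dif_neg (by omega)]
    refine ⟨by simp; omega, rfl, List.isChain_singleton _, ?_, by simp⟩
    intro v hv
    simp at hv
    exact Or.inl hv
  | succ m IH =>
    intro t ht ht2
    by_cases hlt : t < k * N
    · obtain ⟨IHlen, IHlast, IHchain, IHmem, IHnodup⟩ := IH (t + 1) (by omega) (by omega)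
      rw [canonAux, dif_pos hlt]
      have hne : canonAux G hN i r (t + 1) ≠ [] := by
        intro hh; rw [hh] at IHlen; simp at IHlen; omega
      have hposval : t / N * N + t % N = t := by
        rw [Nat.mul_comm]; exact Nat.div_add_mod t N
      refine ⟨?_, ?_, ?_, ?_, ?_⟩
      · simp only [List.length_cons]; omega
      · rw [getLast?_cons_ne_nil hne]; exact IHlast
      · rw [List.Chain', List.isChain_cons]
        refine ⟨?_, IHchain⟩
        intro y hy
        by_cases hlt2 : t + 1 < k * N
        · rw [canonAux, dif_pos hlt2] at hy
          simp only [List.head?_cons, Option.mem_def, Option.some.injEq] at hy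
          subst hy
          refine step_edge G i r _ _ _ _ ?_
          show (t + 1) / N * N + (t + 1) % N = t / N * N + t % N + 1
          have h2 : (t + 1) / N * N + (t + 1) % N = t + 1 := by
            rw [Nat.mul_comm]; exact Nat.div_add_mod (t + 1) N
          omega
        · rw [canonAux, dif_neg hlt2] at hy
          simp only [List.head?_cons, Option.mem_def, Option.some.injEq] at hy
          subst hy
          have htv : t + 1 = k * N := by omega
          have hmod' : t % N + 1 = N := by
            rcases Nat.lt_or_ge (t % N + 1) N with hh | hh
            · obtain ⟨hd, hm⟩ := div_mod_succ_lt hN hh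
              have : (t + 1) % N = 0 := by rw [htv, Nat.mul_mod_left]
              omega
            · have := Nat.mod_lt t hN; omega
          have hdiv : t / N + 1 = k := by
            obtain ⟨hd, hm⟩ := div_mod_succ_eq hN hmod'
            have : (t + 1) / N = k := by rw [htv, Nat.mul_div_cancel k hN]
            omega
          exact DVertE.snkB i _ _ _ hdiv hmod'
      · intro v hv
        rw [List.mem_cons] at hv
        rcases hv with hv | hv
        · right
          refine ⟨_, _, hv, ?_⟩
          show t ≤ t / N * N + t % N
          omega
        · rcases IHmem v hv with h | ⟨j, ℓ, hvj, hle⟩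
          · exact Or.inl h
          · exact Or.inr ⟨j, ℓ, hvj, by omega⟩
      · rw [List.nodup_cons]
        refine ⟨?_, IHnodup⟩
        intro hmem
        rcases IHmem _ hmem with h | ⟨j, ℓ, hvj, hle⟩
        · exact vNode_ne_b G h
        · obtain ⟨-, hj, -, hl⟩ := vNode_eq_iff G |>.mp hvj
          have hv1 : (j : ℕ) = t / N := by rw [← hj]
          have hv2 : (ℓ : ℕ) = t % N := by rw [← hl]
          rw [hv1, hv2] at hle
          omega
    · obtain h := IH t (by omega) ht2
      exact h

lemma canonList_path (hN : 0 < N) (hk : 0 < k) (i : Fin k) (r : Fin N) :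
    IsPathList (DVertE k N G) (DVertV.a i) (DVertV.b i)
      (DVertV.a i :: canonAux G hN i r 0) ∧
    (DVertV.a i :: canonAux G hN i r 0).length = k * N + 2 := by
  have hkN : 0 < k * N := Nat.mul_pos hk hN
  obtain ⟨hlen, hlast, hchain, hmem, hnodup⟩ :=
    canonAux_props G hN i r (k * N) 0 (by omega) (by omega)
  have hne : canonAux G hN i r 0 ≠ [] := by
    intro hh; rw [hh] at hlen; simp only [List.length_nil] at hlen; omega
  refine ⟨⟨?_, ?_, rfl, ?_⟩, by simp only [List.length_cons]; omega⟩
  · rw [List.Chain', List.isChain_cons]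
    refine ⟨?_, hchain⟩
    intro y hy
    rw [canonAux, dif_pos hkN] at hy
    simp only [List.head?_cons, Option.mem_def, Option.some.injEq] at hy
    subst hy
    exact DVertE.srcA i _ _ _ (Nat.zero_div N) (Nat.zero_mod N)
  · rw [List.nodup_cons]
    refine ⟨?_, hnodup⟩
    intro hmem'
    rcases hmem _ hmem' with h | ⟨j, ℓ, hvj, _⟩
    · exact absurd h (by simp)
    · exact vNode_ne_a G hvj.symm
  · rw [getLast?_cons_ne_nil hne]; exact hlast

end Aux3
section Aux4
set_option linter.unusedSectionVars false
variable {k N : ℕ} (G : SimpleGraph (Fin N)) [DecidableRel G.Adj]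

lemma edge_inv {v w : DVertV k N} (h : DVertE k N G v w) :
    (∃ (i j : Fin k) (q ℓ ℓ' : Fin N), v = vNode G i j q ℓ ∧ w = vNode G i j q ℓ' ∧
      (ℓ' : ℕ) = (ℓ : ℕ) + 1) ∨
    (∃ (i j : Fin k) (q q' ℓ : Fin N), v = DVertV.gridH i j q ℓ ∧ w = DVertV.gridH i j q' ℓ) ∨
    (∃ (i i' j : Fin k) (q q' ℓ : Fin N), v = DVertV.gridH i j q ℓ ∧
      w = DVertV.gridH i' j q' ℓ) ∨
    (∃ (i j j' : Fin k) (q ℓ ℓ' : Fin N), v = vNode G i j q ℓ ∧ w = vNode G i j' q ℓ' ∧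
      (j' : ℕ) = (j : ℕ) + 1 ∧ (ℓ : ℕ) + 1 = N ∧ (ℓ' : ℕ) = 0) ∨
    (∃ (i j : Fin k) (q ℓ : Fin N), v = DVertV.a i ∧ w = vNode G i j q ℓ ∧
      (j : ℕ) = 0 ∧ (ℓ : ℕ) = 0) ∨
    (∃ (i j : Fin k) (q ℓ : Fin N), v = vNode G i j q ℓ ∧ w = DVertV.b i ∧
      (j : ℕ) + 1 = k ∧ (ℓ : ℕ) + 1 = N) ∨
    (∃ (i j : Fin k) (q ℓ : Fin N), v = DVertV.c j ∧ w = DVertV.gridH i j q ℓ) ∨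
    (∃ (i j : Fin k) (q ℓ : Fin N), v = DVertV.gridH i j q ℓ ∧ w = DVertV.d j) := by
  cases h with
  | up i j q ℓ ℓ' h => exact Or.inl ⟨i, j, q, ℓ, ℓ', rfl, rfl, h⟩
  | right i j q q' ℓ h => exact Or.inr (Or.inl ⟨i, j, q, q', ℓ, rfl, rfl⟩)
  | hmatch i i' j q q' ℓ hi hq hq' =>
    exact Or.inr (Or.inr (Or.inl ⟨i, i', j, q, q', ℓ, rfl, rfl⟩))
  | vmatch i j j' q ℓ ℓ' hj hl hl' =>
    exact Or.inr (Or.inr (Or.inr (Or.inl ⟨i, j, j', q, ℓ, ℓ', rfl, rfl, hj, hl, hl'⟩)))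
  | srcA i j q ℓ hj hl =>
    exact Or.inr (Or.inr (Or.inr (Or.inr (Or.inl ⟨i, j, q, ℓ, rfl, rfl, hj, hl⟩))))
  | snkB i j q ℓ hj hl =>
    exact Or.inr (Or.inr (Or.inr (Or.inr (Or.inr (Or.inl ⟨i, j, q, ℓ, rfl, rfl, hj, hl⟩)))))
  | srcC i j q ℓ hi hq =>
    exact Or.inr (Or.inr (Or.inr (Or.inr (Or.inr (Or.inr (Or.inl ⟨i, j, q, ℓ, rfl, rfl⟩))))))
  | snkD i j q ℓ hi hq =>
    exact Or.inr (Or.inr (Or.inr (Or.inr (Or.inr (Or.inr (Or.inr ⟨i, j, q, ℓ, rfl, rfl⟩))))))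

lemma vert_suffix (i : Fin k) (r : Fin N) :
    ∀ (p : List (DVertV k N)) (jj : Fin k) (ℓ : Fin N),
      p.Chain' (DVertE k N G) → p.head? = some (vNode G i jj r ℓ) →
      p.getLast? = some (DVertV.b i) → p.length + (jj : ℕ) * N + (ℓ : ℕ) = k * N + 1 →
      ∀ (j' : Fin k) (ℓ' : Fin N), (jj : ℕ) * N + (ℓ : ℕ) ≤ (j' : ℕ) * N + (ℓ' : ℕ) →
        vNode G i j' r ℓ' ∈ p := by
  intro p
  induction p with
  | nil => intro jj ℓ _ hh; simp at hh
  | cons v rest IH =>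
    intro jj ℓ hch hh hl hlen j' ℓ' hle
    have hv : v = vNode G i jj r ℓ := by simpa using hh
    rcases Nat.eq_or_lt_of_le hle with heq | hlt
    · obtain ⟨hj, hl'⟩ := pos_inj heq.symm
      rw [hj, hl', ← hv]
      exact List.mem_cons_self
    · -- strictly later target; the path must continue
      have htb : (j' : ℕ) * N + (ℓ' : ℕ) + 1 ≤ k * N := pos_add_one_le j' ℓ'
      cases rest with
      | nil =>
        exfalso
        have hvb : v = DVertV.b i := by simpa using hl
        rw [hv] at hvb
        exact vNode_ne_b G hvb
      | cons w rest' =>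
        rw [List.Chain', List.isChain_cons_cons] at hch
        have hlast' : (w :: rest').getLast? = some (DVertV.b i) := by
          rw [← hl]; exact (List.getLast?_cons_cons ..).symm
        have hpot := chain_pot (fun v w h => phiV_step G h) (w :: rest') w (DVertV.b i)
          hch.2 rfl hlast'
        have hwle : phiV k N w ≤ (jj : ℕ) * N + (ℓ : ℕ) + 1 + 1 := by
          have := phiV_step G hch.1
          rw [hv, phiV_vNode] at this
          omega
        have hlenr : (w :: rest').length + (jj : ℕ) * N + (ℓ : ℕ) = k * N := by
          simp only [List.length_cons] at hlen ⊢; omega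
        have hphiw : phiV k N w = (jj : ℕ) * N + (ℓ : ℕ) + 2 := by
          have hb : phiV k N (DVertV.b i) = k * N + 1 := rfl
          rw [hb] at hpot
          simp only [List.length_cons] at hpot hlenr
          omega
        have hedge := hch.1
        rw [hv] at hedge
        -- classify the edge
        have hmem : vNode G i j' r ℓ' ∈ w :: rest' := by
          rcases edge_inv G hedge with
            ⟨i1, j1, q1, ℓ1, ℓ1', hv1, hw1, hup⟩ |
            ⟨i1, j1, q1, q1', ℓ1, hv1, hw1⟩ |
            ⟨i1, i1', j1, q1, q1', ℓ1, hv1, hw1⟩ |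
            ⟨i1, j1, j1', q1, ℓ1, ℓ1', hv1, hw1, hj1, hl1, hl1'⟩ |
            ⟨i1, j1, q1, ℓ1, hv1, hw1, hj1, hl1⟩ |
            ⟨i1, j1, q1, ℓ1, hv1, hw1, hj1, hl1⟩ |
            ⟨i1, j1, q1, ℓ1, hv1, hw1⟩ |
            ⟨i1, j1, q1, ℓ1, hv1, hw1⟩
          · -- up edge
            obtain ⟨hi1, hj1, hq1, hℓ1⟩ := (vNode_eq_iff G).mp hv1
            have hw' : w = vNode G i jj r ℓ1' := by rw [hw1, hi1, hj1, hq1]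
            have hup' : (ℓ1' : ℕ) = (ℓ : ℕ) + 1 := by rw [hup, hℓ1]
            refine IH jj ℓ1' hch.2 (by rw [List.head?_cons, hw']) hlast' ?_ j' ℓ' (by omega)
            simp only [List.length_cons] at hlenr ⊢; omega
          · -- right edge: impossible, potential stays
            exfalso
            have h1 : ((j1 : ℕ) * N + (ℓ1 : ℕ) + 1 : ℕ) = (jj : ℕ) * N + (ℓ : ℕ) + 1 := by
              have := congrArg (phiV k N) hv1
              rw [phiV_vNode] at this
              exact this.symm
            have h2 : phiV k N w = (j1 : ℕ) * N + (ℓ1 : ℕ) + 1 := by rw [hw1]; rfl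
            omega
          · -- hmatch edge: impossible, potential stays
            exfalso
            have h1 : ((j1 : ℕ) * N + (ℓ1 : ℕ) + 1 : ℕ) = (jj : ℕ) * N + (ℓ : ℕ) + 1 := by
              have := congrArg (phiV k N) hv1
              rw [phiV_vNode] at this
              exact this.symm
            have h2 : phiV k N w = (j1 : ℕ) * N + (ℓ1 : ℕ) + 1 := by rw [hw1]; rfl
            omega
          · -- vmatch edge
            obtain ⟨hi1, hjj1, hq1, hℓ1⟩ := (vNode_eq_iff G).mp hv1
            have hw' : w = vNode G i j1' r ℓ1' := by rw [hw1, hi1, hq1]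
            have hjv : (j1' : ℕ) * N = (jj : ℕ) * N + (ℓ : ℕ) + 1 := by
              rw [hj1, ← hjj1, Nat.add_mul, Nat.one_mul, hℓ1]
              omega
            refine IH j1' ℓ1' hch.2 (by rw [List.head?_cons, hw']) hlast' ?_ j' ℓ' (by omega)
            simp only [List.length_cons] at hlenr ⊢; omega
          · -- srcA: impossible
            exact absurd hv1 (vNode_ne_a G)
          · -- snkB: impossible since we are not at the last position
            exfalso
            obtain ⟨hi1, hjj1, hq1, hℓ1⟩ := (vNode_eq_iff G).mp hv1
            have h2 : ((jj : ℕ) + 1) * N = k * N := by rw [hjj1, hj1]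
            rw [Nat.add_mul, Nat.one_mul] at h2
            have h3 : (ℓ : ℕ) + 1 = N := by rw [hℓ1]; exact hl1
            omega
          · -- srcC: impossible
            exact absurd hv1 (vNode_ne_c G)
          · -- snkD: impossible, potential drops
            exfalso
            have h2 : phiV k N w = 0 := by rw [hw1]; rfl
            omega
        rw [hv]
        exact List.mem_cons_of_mem _ hmem

lemma shortest_ab (hN : 0 < N) (hk : 0 < k) (i : Fin k) (p : List (DVertV k N))
    (hp : IsShortestDirPath (DVertE k N G) (DVertV.a i) (DVertV.b i) p) :
    ∃ r : Fin N, ∀ (j : Fin k) (ℓ : Fin N), vNode G i j r ℓ ∈ p := by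
  obtain ⟨hpath, hmin⟩ := hp
  -- upper bound from the canonical path
  obtain ⟨hcanon, hcanonlen⟩ := canonList_path G hN hk i ⟨0, hN⟩
  have hub : p.length ≤ k * N + 2 := by
    have := hmin _ hcanon
    omega
  -- lower bound from the potential
  have hlb : k * N + 2 ≤ p.length := by
    have := chain_pot (fun v w h => phiV_step G h) p _ _ hpath.chain hpath.head hpath.last
    have h1 : phiV k N (DVertV.b i) = k * N + 1 := rfl
    have h2 : phiV k N (DVertV.a i) = 0 := rfl
    omega
  cases p with
  | nil => exact absurd hlb (by simp)
  | cons v rest =>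
    have hv : v = DVertV.a i := by
      have := hpath.head
      simpa using this
    cases rest with
    | nil => simp only [List.length_cons, List.length_nil] at hub hlb; omega
    | cons w rest' =>
      have hch := hpath.chain
      rw [List.Chain', List.isChain_cons_cons] at hch
      have hedge := hch.1
      rw [hv] at hedge
      have hlast' : (w :: rest').getLast? = some (DVertV.b i) := by
        rw [← hpath.last]; exact (List.getLast?_cons_cons ..).symm
      rcases edge_inv G hedge with
        ⟨i1, j1, q1, ℓ1, ℓ1', hv1, hw1, hup⟩ |
        ⟨i1, j1, q1, q1', ℓ1, hv1, hw1⟩ |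
        ⟨i1, i1', j1, q1, q1', ℓ1, hv1, hw1⟩ |
        ⟨i1, j1, j1', q1, ℓ1, ℓ1', hv1, hw1, hj1, hl1, hl1'⟩ |
        ⟨i1, j1, q1, ℓ1, hv1, hw1, hj1, hl1⟩ |
        ⟨i1, j1, q1, ℓ1, hv1, hw1, hj1, hl1⟩ |
        ⟨i1, j1, q1, ℓ1, hv1, hw1⟩ |
        ⟨i1, j1, q1, ℓ1, hv1, hw1⟩
      · exact absurd hv1.symm (vNode_ne_a G)
      · simp at hv1
      · simp at hv1
      · exact absurd hv1.symm (vNode_ne_a G)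
      · -- srcA case
        have hii : i1 = i := by
          have : DVertV.a i = DVertV.a i1 := hv1
          simpa using this.symm
        have hw' : w = vNode G i j1 q1 ℓ1 := by rw [hw1, hii]
        refine ⟨q1, fun j ℓ => ?_⟩
        have hj1N : (j1 : ℕ) * N = 0 := by rw [hj1]; exact Nat.zero_mul N
        have hlen' : (w :: rest').length + (j1 : ℕ) * N + (ℓ1 : ℕ) = k * N + 1 := by
          have hplen : (DVertV.a i :: w :: rest').length = k * N + 2 := by
            rw [← hv]
            omega
          simp only [List.length_cons] at hplen ⊢
          omega
        have hmem := vert_suffix G i q1 (w :: rest') j1 ℓ1 hch.2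
          (by rw [List.head?_cons, hw']) hlast' hlen' j ℓ (by omega)
        exact List.mem_cons_of_mem _ hmem
      · exact absurd hv1.symm (vNode_ne_a G)
      · simp at hv1
      · simp at hv1

end Aux4
section Aux5
set_option linter.unusedSectionVars false
variable {k N : ℕ} (G : SimpleGraph (Fin N)) [DecidableRel G.Adj]

lemma map_pathlist {s t : DVertV k N} {p : List (DVertV k N)}
    (h : IsPathList (DVertE k N G) s t p) :
    IsPathList (DVertE k N G) (sigmaV G s) (sigmaV G t) (p.map (sigmaV G)) := by
  refine ⟨?_, ?_, ?_, ?_⟩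
  · exact List.isChain_map_of_isChain _ (fun a b hab => sigmaV_edge G hab) h.chain
  · exact h.nodup.map (sigmaV_inj G)
  · rw [List.head?_map, h.head]; rfl
  · rw [List.getLast?_map, h.last]; rfl

lemma map_shortest {s t : DVertV k N} {p : List (DVertV k N)}
    (h : IsShortestDirPath (DVertE k N G) s t p) :
    IsShortestDirPath (DVertE k N G) (sigmaV G s) (sigmaV G t) (p.map (sigmaV G)) := by
  obtain ⟨hpath, hmin⟩ := h
  refine ⟨map_pathlist G hpath, fun q hq => ?_⟩
  have hq' := map_pathlist G hq
  rw [sigmaV_invol, sigmaV_invol] at hq'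
  have := hmin _ hq'
  rw [List.length_map] at this ⊢
  exact this

lemma shortest_cd (hN : 0 < N) (hk : 0 < k) (j : Fin k) (p : List (DVertV k N))
    (hp : IsShortestDirPath (DVertE k N G) (DVertV.c j) (DVertV.d j) p) :
    ∃ c : Fin N, ∀ (i : Fin k) (q : Fin N), DVertV.gridH i j q c ∈ p := by
  have hp' := map_shortest G hp
  have hsc : sigmaV G (DVertV.c j) = (DVertV.a j : DVertV k N) := rfl
  have hsd : sigmaV G (DVertV.d j) = (DVertV.b j : DVertV k N) := rfl
  rw [hsc, hsd] at hp'
  obtain ⟨r, hr⟩ := shortest_ab G hN hk j _ hp'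
  refine ⟨r, fun i q => ?_⟩
  have hmem := hr i q
  have hform : vNode G j i r q = sigmaV G (DVertV.gridH i j q r) := by
    rw [show sigmaV G (DVertV.gridH i j q r) = vNode G j i r q from rfl]
  rw [hform] at hmem
  obtain ⟨z, hz, hzx⟩ := List.mem_map.mp hmem
  rwa [← sigmaV_inj G hzx]

end Aux5
/-- let `0 < ε ≤ 1/2`. If there is a collection `P` of pairwise
vertex-disjoint directed paths in `D_vertex` such that for at least `(1/2 + ε)·2k` of
the `2k` terminal pairs `(s,t) ∈ T` the collection contains a shortest `s⇝t` path, then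
`G` contains a clique of size at least `2εk`. -/
theorem DVert_soundness (N k : ℕ) (hN : 1 ≤ N) (hk : 1 ≤ k)
    (G : SimpleGraph (Fin N)) [DecidableRel G.Adj]
    (ε : ℝ) (hε0 : 0 < ε) (hε : ε ≤ 1 / 2)
    (SAT : Finset (Fin k ⊕ Fin k)) (P : Fin k ⊕ Fin k → List (DVertV k N))
    (hcard : (1 / 2 + ε) * (2 * k) ≤ (SAT.card : ℝ))
    (hshort : ∀ x ∈ SAT, IsShortestDirPath (DVertE k N G) (vSrc x) (vDst x) (P x))
    (hdisj : ∀ x ∈ SAT, ∀ y ∈ SAT, x ≠ y → VertDisj (P x) (P y)) :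
    ∃ Z : Finset (Fin N),
      2 * ε * k ≤ (Z.card : ℝ) ∧ ∀ u ∈ Z, ∀ v ∈ Z, u ≠ v → G.Adj u v := by
  classical
  have hN0 : 0 < N := hN
  have hk0 : 0 < k := hk
  have hA : ∀ i : Fin k, Sum.inl i ∈ SAT →
      ∃ r : Fin N, ∀ (j : Fin k) (ℓ : Fin N), vNode G i j r ℓ ∈ P (Sum.inl i) :=
    fun i hi => shortest_ab G hN0 hk0 i _ (hshort _ hi)
  have hC : ∀ j : Fin k, Sum.inr j ∈ SAT →
      ∃ c : Fin N, ∀ (i : Fin k) (q : Fin N), DVertV.gridH i j q c ∈ P (Sum.inr j) :=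
    fun j hj => shortest_cd G hN0 hk0 j _ (hshort _ hj)
  choose r hr using hA
  choose c hc using hC
  -- the crossing argument
  have key : ∀ (i j : Fin k) (hi : Sum.inl i ∈ SAT) (hj : Sum.inr j ∈ SAT),
      Split G i j (r i hi) (c j hj) := by
    intro i j hi hj
    by_contra hsplit
    have h1 : vNode G i j (r i hi) (c j hj) ∈ P (Sum.inl i) := hr i hi j (c j hj)
    have h2 : DVertV.gridH i j (r i hi) (c j hj) ∈ P (Sum.inr j) := hc j hj i (r i hi)
    have hne : (Sum.inl i : Fin k ⊕ Fin k) ≠ Sum.inr j := by simp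
    have h3 := hdisj _ hi _ hj hne _ h1
    rw [vNode_of_not_split G hsplit] at h3
    exact h3 h2
  have diag : ∀ (i : Fin k) (hi : Sum.inl i ∈ SAT) (hj : Sum.inr i ∈ SAT),
      r i hi = c i hj := by
    intro i hi hj
    rcases key i i hi hj with ⟨-, h⟩ | ⟨hne, -⟩
    · exact h
    · exact absurd rfl hne
  have adjkey : ∀ (i j : Fin k), i ≠ j → ∀ (hi : Sum.inl i ∈ SAT) (hj : Sum.inr j ∈ SAT),
      G.Adj (r i hi) (c j hj) := by
    intro i j hne hi hj
    rcases key i j hi hj with ⟨hij, -⟩ | ⟨-, h⟩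
    · exact absurd hij hne
    · exact h
  -- the sets of satisfied row and column pairs
  set A : Finset (Fin k) := Finset.univ.filter (fun i => Sum.inl i ∈ SAT) with hA_def
  set B : Finset (Fin k) := Finset.univ.filter (fun i => Sum.inr i ∈ SAT) with hB_def
  set S : Finset (Fin k) := A ∩ B with hS_def
  have hmemS : ∀ i ∈ S, Sum.inl i ∈ SAT ∧ Sum.inr i ∈ SAT := by
    intro i hiS
    rw [hS_def, Finset.mem_inter, hA_def, hB_def, Finset.mem_filter, Finset.mem_filter] at hiS
    exact ⟨hiS.1.2, hiS.2.2⟩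
  set f : Fin k → Fin N := fun i => if h : Sum.inl i ∈ SAT then r i h else ⟨0, hN0⟩ with hf_def
  have hfadj : ∀ i ∈ S, ∀ j ∈ S, i ≠ j → G.Adj (f i) (f j) := by
    intro i hiS j hjS hne
    obtain ⟨hi1, -⟩ := hmemS i hiS
    obtain ⟨hj1, hj2⟩ := hmemS j hjS
    have h1 : f i = r i hi1 := dif_pos hi1
    have h2 : f j = r j hj1 := dif_pos hj1
    rw [h1, h2, diag j hj1 hj2]
    exact adjkey i j hne hi1 hj2
  -- cardinality bound
  have hsub : SAT ⊆ A.image Sum.inl ∪ B.image Sum.inr := by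
    intro x hx
    rcases x with i | j
    · exact Finset.mem_union_left _ (Finset.mem_image_of_mem _ (by
        rw [hA_def, Finset.mem_filter]; exact ⟨Finset.mem_univ _, hx⟩))
    · exact Finset.mem_union_right _ (Finset.mem_image_of_mem _ (by
        rw [hB_def, Finset.mem_filter]; exact ⟨Finset.mem_univ _, hx⟩))
  have hcard1 : SAT.card ≤ A.card + B.card := by
    calc SAT.card ≤ (A.image Sum.inl ∪ B.image Sum.inr).card := Finset.card_le_card hsub
      _ ≤ (A.image Sum.inl).card + (B.image Sum.inr).card := Finset.card_union_le _ _
      _ ≤ A.card + B.card := Nat.add_le_add (Finset.card_image_le) (Finset.card_image_le)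
  have hcard2 : A.card + B.card = (A ∪ B).card + S.card := by
    rw [hS_def]
    exact (Finset.card_union_add_card_inter A B).symm
  have hcard3 : (A ∪ B).card ≤ k := by
    calc (A ∪ B).card ≤ Fintype.card (Fin k) := Finset.card_le_univ _
      _ = k := Fintype.card_fin k
  have hScard : SAT.card ≤ k + S.card := by omega
  -- assemble the clique
  refine ⟨S.image f, ?_, ?_⟩
  · have himg : (S.image f).card = S.card := by
      apply Finset.card_image_of_injOn
      intro i hiS j hjS hfij
      by_contra hne
      exact (G.ne_of_adj (hfadj i hiS j hjS hne)) hfij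
    rw [himg]
    have hc1 : (SAT.card : ℝ) ≤ k + S.card := by exact_mod_cast hScard
    have hc2 : (1 / 2 + ε) * (2 * k) = k + 2 * ε * k := by ring
    linarith
  · intro u hu v hv huv
    obtain ⟨i, hiS, hfi⟩ := Finset.mem_image.mp hu
    obtain ⟨j, hjS, hfj⟩ := Finset.mem_image.mp hv
    have hne : i ≠ j := by
      intro h
      rw [h, hfj] at hfi
      exact huv hfi.symm
    rw [← hfi, ← hfj]
    exact hfadj i hiS j hjS hne
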